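/- Fix η > 0 and a nonzero vector g ∈ ℝ^d. The unique minimizer over w ∈ ℝ^d of the function w ↦ ψ(w)/η + ⟨g, w⟩, where ψ(w) = (‖w‖+1)log(‖w‖+1) − ‖w‖, is w* = −(g/‖g‖)·(exp(η‖g‖) − 1). -/

import Mathlib

open scoped RealInnerProductSpace

lemma slog_le (a s : ℝ) (hs : 0 < s) :
    (1 + a) * s - Real.exp a ≤ s * Real.log s := by
  have h2 := Real.add_one_le_exp (a - Real.log s)
  have h3 : Real.exp (a - Real.log s) = Real.exp a / s := by
    rw [Real.exp_sub, Real.exp_log hs]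
  rw [h3] at h2
  have h4 := (le_div_iff₀ hs).mp h2
  nlinarith

lemma slog_lt (a s : ℝ) (hs : 0 < s) (hne : s ≠ Real.exp a) :
    (1 + a) * s - Real.exp a < s * Real.log s := by
  have h1 : a - Real.log s ≠ 0 := by
    intro h
    apply hne
    have : Real.log s = a := by linarith
    rw [← this, Real.exp_log hs]
  have h2 := Real.add_one_lt_exp h1
  have h3 : Real.exp (a - Real.log s) = Real.exp a / s := by
    rw [Real.exp_sub, Real.exp_log hs]
  rw [h3] at h2
  have h4 := (lt_div_iff₀ hs).mp h2
  nlinarith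

/-- Closed form of the FTRL update with regularizer ψ(w)/η plus linear term. -/
theorem stmt2 (d : ℕ) (η : ℝ) (hη : 0 < η) (g : EuclideanSpace ℝ (Fin d)) (hg : g ≠ 0) :
    let ψ : EuclideanSpace ℝ (Fin d) → ℝ := fun w => (‖w‖ + 1) * Real.log (‖w‖ + 1) - ‖w‖
    let f : EuclideanSpace ℝ (Fin d) → ℝ := fun w => ψ w / η + ⟪g, w⟫
    let wstar : EuclideanSpace ℝ (Fin d) := (-(Real.exp (η * ‖g‖) - 1) / ‖g‖) • g
    (∀ w, f wstar ≤ f w) ∧ (∀ w, (∀ w', f w ≤ f w') → w = wstar) := by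
  intro ψ f wstar
  set G := ‖g‖ with hGdef
  have hG : 0 < G := norm_pos_iff.mpr hg
  set a := η * G with ha
  have ha0 : 0 < a := mul_pos hη hG
  have hea : 1 < Real.exp a := by linarith [Real.add_one_le_exp a]
  set r : ℝ := Real.exp a - 1 with hr
  have hr0 : 0 < r := by simp [hr]; linarith
  -- norm of wstar
  have hwnorm : ‖wstar‖ = r := by
    show ‖(-(Real.exp (η * ‖g‖) - 1) / ‖g‖) • g‖ = r
    rw [norm_smul]
    rw [Real.norm_eq_abs]
    rw [abs_div, abs_neg, abs_of_pos (by rw [← ha]; exact hr0 : (0:ℝ) < Real.exp (η*‖g‖) - 1), abs_of_pos hG]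
    field_simp
    rfl
  have hwinner : ⟪g, wstar⟫ = -(G * r) := by
    show ⟪g, (-(Real.exp (η * ‖g‖) - 1) / ‖g‖) • g⟫ = -(G * r)
    rw [real_inner_smul_right, real_inner_self_eq_norm_sq]
    rw [← hGdef, ← ha, ← hr]
    field_simp
  have hlogr : Real.log (r + 1) = a := by
    rw [hr]; simp [Real.log_exp]
  -- value at wstar
  have hfwstar : f wstar = ((r+1) * a - r) / η - G * r := by
    show ψ wstar / η + ⟪g, wstar⟫ = _
    rw [hwinner]
    show ((‖wstar‖ + 1) * Real.log (‖wstar‖ + 1) - ‖wstar‖) / η + _ = _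
    rw [hwnorm, hlogr]
    ring
  have hmain : ∀ w : EuclideanSpace ℝ (Fin d), f wstar ≤ f w := by
    intro w
    have hinner : -(G * ‖w‖) ≤ ⟪g, w⟫ := by
      have := abs_real_inner_le_norm g w
      have := abs_le.mp this
      linarith [this.1]
    have hs : (0:ℝ) < ‖w‖ + 1 := by positivity
    have hkey := slog_le a (‖w‖ + 1) hs
    have hfw : f w = ((‖w‖+1) * Real.log (‖w‖+1) - ‖w‖) / η + ⟪g, w⟫ := rfl
    rw [hfwstar, hfw]
    rw [div_sub' (ne_of_gt hη), div_add' _ _ _ (ne_of_gt hη), div_le_div_iff₀ hη hη]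
    have e1 : ((r + 1) * a - r - η * (G * r)) = 1 + a - Real.exp a := by
      rw [hr, ha]; ring
    rw [e1]
    have hkeyη := mul_le_mul_of_nonneg_right hkey hη.le
    have hinn2 := mul_le_mul_of_nonneg_right (mul_le_mul_of_nonneg_right hinner hη.le) hη.le
    have hax : a * (‖w‖ * η) = G * ‖w‖ * (η * η) := by rw [ha]; ring
    nlinarith [hkeyη, hinn2, hax]
  refine ⟨hmain, ?_⟩
  intro w hw
  have hle : f w ≤ f wstar := hw wstar
  have heq : f w = f wstar := le_antisymm hle (hmain w)
  -- norm equals r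
  have hs : (0:ℝ) < ‖w‖ + 1 := by positivity
  have hnorm : ‖w‖ = r := by
    by_contra hne
    have hne' : ‖w‖ + 1 ≠ Real.exp a := by
      intro h; apply hne; rw [hr]; linarith
    have hkey := slog_lt a (‖w‖ + 1) hs hne'
    have hinner : -(G * ‖w‖) ≤ ⟪g, w⟫ := by
      have := abs_le.mp (abs_real_inner_le_norm g w)
      linarith [this.1]
    have hfw : f w = ((‖w‖+1) * Real.log (‖w‖+1) - ‖w‖) / η + ⟪g, w⟫ := rfl
    rw [hfwstar, hfw] at heq
    have : ((r+1) * a - r) / η - G * r < ((‖w‖+1) * Real.log (‖w‖+1) - ‖w‖) / η + ⟪g, w⟫ := by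
      rw [div_sub' (ne_of_gt hη), div_add' _ _ _ (ne_of_gt hη), div_lt_div_iff₀ hη hη]
      have e1 : ((r + 1) * a - r - η * (G * r)) = 1 + a - Real.exp a := by
        rw [hr, ha]; ring
      rw [e1]
      have hkeyη := mul_lt_mul_of_pos_right hkey hη
      have hinn2 := mul_le_mul_of_nonneg_right (mul_le_mul_of_nonneg_right hinner hη.le) hη.le
      have hax : a * (‖w‖ * η) = G * ‖w‖ * (η * η) := by rw [ha]; ring
      nlinarith [hkeyη, hinn2, hax]
    linarith [heq.le, this]
  -- inner product equality
  have hinner_eq : ⟪g, w⟫ = -(G * r) := by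
    have hfw : f w = ((‖w‖+1) * Real.log (‖w‖+1) - ‖w‖) / η + ⟪g, w⟫ := rfl
    rw [hfwstar, hfw, hnorm, hlogr] at heq
    have heq' := congrArg (fun t => t * η) heq
    field_simp at heq'
    nlinarith [heq', hη]
  -- show G • w + r • g = 0
  have hzero : (G • w + r • g : EuclideanSpace ℝ (Fin d)) = 0 := by
    have hsq : ‖(G • w + r • g : EuclideanSpace ℝ (Fin d))‖^2 = 0 := by
      have hcomm : ⟪w, g⟫ = -(G * r) := by rw [real_inner_comm]; exact hinner_eq
      rw [norm_add_sq_real]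
      rw [norm_smul, norm_smul, real_inner_smul_left, real_inner_smul_right, hcomm, hnorm]
      rw [Real.norm_eq_abs, Real.norm_eq_abs, abs_of_pos hG, abs_of_pos hr0]
      rw [← hGdef]
      ring
    have := pow_eq_zero_iff (n := 2) (by norm_num) |>.mp hsq
    exact norm_eq_zero.mp this
  have : w = (-r / G) • g := by
    have h1 : G • w = (-r) • g := by
      have := hzero
      rw [add_eq_zero_iff_eq_neg] at this
      rw [this, ← neg_smul]
    have h2 := congrArg (fun v => (G⁻¹ : ℝ) • v) h1
    simp only [smul_smul] at h2
    rw [inv_mul_cancel₀ (ne_of_gt hG), one_smul] at h2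
    rw [h2]
    congr 1
    field_simp
  rw [this]
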